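/- Let N ≥ 1 be an integer. Then (∏_{p ∈ N.primeFactors} p) · #{H : H is an additive subgroup of (ℤ/Nℤ) × (ℤ/Nℤ), H is cyclic (H = zmultiples x for some x) and Nat.card H = N} = N · ∏_{p ∈ N.primeFactors} (p + 1). Equivalently, the number of cyclic subgroups of order N of (ℤ/Nℤ)² equals N·∏_{p | N}(1 + 1/p). -/

import Mathlib

open AddSubgroup


lemma nsmul_self_zmod (n : ℕ) (x : ZMod n × ZMod n) : n • x = 0 := by
  ext
  · show n • x.1 = 0
    rw [nsmul_eq_mul, ZMod.natCast_self, zero_mul]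
  · show n • x.2 = 0
    rw [nsmul_eq_mul, ZMod.natCast_self, zero_mul]

lemma addOrderOf_dvd_zmod (n : ℕ) (x : ZMod n × ZMod n) : addOrderOf x ∣ n :=
  addOrderOf_dvd_of_nsmul_eq_zero (nsmul_self_zmod n x)

lemma card_order_eq_totient (n : ℕ) [NeZero n] :
    Nat.card {a : ZMod n // addOrderOf a = n} = Nat.totient n := by
  classical
  rw [Nat.card_eq_fintype_card, Fintype.card_subtype]
  have := IsAddCyclic.card_addOrderOf_eq_totient (α := ZMod n)
      (d := n) (by rw [ZMod.card])
  simpa using this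

lemma card_order_ne (p e : ℕ) (hp : p.Prime) (he : 0 < e) [NeZero (p ^ e)] :
    Nat.card {a : ZMod (p ^ e) // ¬ addOrderOf a = p ^ e} = p ^ (e - 1) := by
  classical
  rw [Nat.card_eq_fintype_card, Fintype.card_subtype_compl, ZMod.card,
    ← Nat.card_eq_fintype_card, card_order_eq_totient, Nat.totient_prime_pow hp he]
  apply Nat.sub_eq_of_eq_add
  have h1 : 1 + (p - 1) = p := by
    have := hp.one_lt; omega
  calc p ^ e = p ^ (e - 1) * p := by
        rw [← pow_succ]; congr 1; omega
    _ = p ^ (e - 1) * (1 + (p - 1)) := by rw [h1]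
    _ = p ^ (e - 1) + p ^ (e - 1) * (p - 1) := by ring

lemma order_prime_pow_iff (p e : ℕ) (hp : p.Prime) (he : 0 < e)
    (x : ZMod (p ^ e) × ZMod (p ^ e)) :
    addOrderOf x = p ^ e ↔ (addOrderOf x.1 = p ^ e ∨ addOrderOf x.2 = p ^ e) := by
  have h1 : addOrderOf x.1 ∣ p ^ e := by
    have := addOrderOf_dvd_zmod (p ^ e) x
    exact (addOrderOf_dvd_of_nsmul_eq_zero (by
      have : (p ^ e) • x.1 = 0 := congrArg Prod.fst (nsmul_self_zmod (p ^ e) x)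
      exact this))
  have h2 : addOrderOf x.2 ∣ p ^ e :=
    addOrderOf_dvd_of_nsmul_eq_zero (congrArg Prod.snd (nsmul_self_zmod (p ^ e) x))
  rw [Prod.addOrderOf]
  constructor
  · intro h
    by_contra hc
    push_neg at hc
    obtain ⟨i, hi, hoi⟩ := (Nat.dvd_prime_pow hp).1 h1
    obtain ⟨j, hj, hoj⟩ := (Nat.dvd_prime_pow hp).1 h2
    have hi' : i < e := lt_of_le_of_ne hi (fun h' => hc.1 (by rw [hoi, h']))
    have hj' : j < e := lt_of_le_of_ne hj (fun h' => hc.2 (by rw [hoj, h']))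
    have : Nat.lcm (p ^ i) (p ^ j) ∣ p ^ (e - 1) :=
      Nat.lcm_dvd (pow_dvd_pow p (by omega)) (pow_dvd_pow p (by omega))
    rw [← hoi, ← hoj, h] at this
    exact absurd (Nat.le_of_dvd (pow_pos hp.pos _) this)
      (by exact not_le.2 (Nat.pow_lt_pow_right hp.one_lt (by omega)))
  · rintro (h | h)
    · rw [h]; exact Nat.dvd_antisymm (Nat.lcm_dvd dvd_rfl h2) (Nat.dvd_lcm_left _ _)
    · rw [h]; exact Nat.dvd_antisymm (Nat.lcm_dvd h1 dvd_rfl) (Nat.dvd_lcm_right _ _)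

lemma countT_prime_pow (p e : ℕ) (hp : p.Prime) (he : 0 < e) [NeZero (p ^ e)] :
    Nat.card {x : ZMod (p ^ e) × ZMod (p ^ e) // addOrderOf x = p ^ e}
      = p ^ (2 * e) - p ^ (2 * (e - 1)) := by
  classical
  have key : Nat.card {x : ZMod (p ^ e) × ZMod (p ^ e) //
      ¬ addOrderOf x = p ^ e} = p ^ (2 * (e - 1)) := by
    have e1 : {x : ZMod (p ^ e) × ZMod (p ^ e) // ¬ addOrderOf x = p ^ e} ≃
        {a : ZMod (p ^ e) // ¬ addOrderOf a = p ^ e} ×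
        {a : ZMod (p ^ e) // ¬ addOrderOf a = p ^ e} := by
      refine (Equiv.subtypeEquivRight (fun x => ?_)).trans
        (Equiv.subtypeProdEquivProd)
      rw [order_prime_pow_iff p e hp he]
      tauto
    rw [Nat.card_congr e1, Nat.card_prod, card_order_ne p e hp he, ← pow_add]
    congr 1; ring
  have ht : Fintype.card (ZMod (p ^ e) × ZMod (p ^ e)) = p ^ (2 * e) := by
    rw [Fintype.card_prod, ZMod.card, ← pow_add]; congr 1; ring
  have hle : Fintype.card {x : ZMod (p ^ e) × ZMod (p ^ e) // addOrderOf x = p ^ e}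
      ≤ Fintype.card (ZMod (p ^ e) × ZMod (p ^ e)) := Fintype.card_subtype_le _
  have hc := Fintype.card_subtype_compl
    (p := fun x : ZMod (p ^ e) × ZMod (p ^ e) => addOrderOf x = p ^ e)
  rw [Nat.card_eq_fintype_card] at key ⊢
  omega




lemma dvd_mul_eq {d1 d2 a b : ℕ} (ha : 0 < a) (hb : 0 < b) (h1 : d1 ∣ a) (h2 : d2 ∣ b)
    (h : d1 * d2 = a * b) : d1 = a ∧ d2 = b := by
  obtain ⟨s, hs⟩ := h1
  obtain ⟨t, ht⟩ := h2
  have hd1 : 0 < d1 := Nat.pos_of_dvd_of_pos ⟨s, hs⟩ ha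
  have hd2 : 0 < d2 := Nat.pos_of_dvd_of_pos ⟨t, ht⟩ hb
  have h' : (d1 * d2) * (s * t) = (d1 * d2) * 1 := by
    rw [mul_one]
    calc (d1 * d2) * (s * t) = (d1 * s) * (d2 * t) := by ring
      _ = a * b := by rw [← hs, ← ht]
      _ = d1 * d2 := h.symm
  have hst : s * t = 1 := Nat.eq_of_mul_eq_mul_left (by positivity) h'
  have hs1 : s = 1 := Nat.eq_one_of_mul_eq_one_right hst
  have ht1 : t = 1 := Nat.eq_one_of_mul_eq_one_left hst
  subst hs1 ht1
  simp only [mul_one] at hs ht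
  exact ⟨hs.symm, ht.symm⟩

lemma countT_coprime (a b : ℕ) (ha : 1 < a) (hb : 1 < b) (hab : Nat.Coprime a b) :
    Nat.card {x : ZMod (a * b) × ZMod (a * b) // addOrderOf x = a * b}
      = Nat.card {x : ZMod a × ZMod a // addOrderOf x = a}
        * Nat.card {x : ZMod b × ZMod b // addOrderOf x = b} := by
  have e0 : ZMod (a * b) ≃+ ZMod a × ZMod b := (ZMod.chineseRemainder hab).toAddEquiv
  have e3 : (ZMod (a * b) × ZMod (a * b)) ≃+ (ZMod a × ZMod a) × (ZMod b × ZMod b) :=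
    (AddEquiv.prodCongr e0 e0).trans (AddEquiv.prodProdProdComm _ _ _ _)
  have horder : ∀ x, addOrderOf (e3 x) = addOrderOf x := fun x =>
    addOrderOf_injective e3.toAddMonoidHom e3.injective x
  have key : ∀ y : (ZMod a × ZMod a) × (ZMod b × ZMod b),
      addOrderOf y = a * b ↔ (addOrderOf y.1 = a ∧ addOrderOf y.2 = b) := by
    intro y
    have d1 : addOrderOf y.1 ∣ a := addOrderOf_dvd_zmod a y.1
    have d2 : addOrderOf y.2 ∣ b := addOrderOf_dvd_zmod b y.2
    have hco : Nat.Coprime (addOrderOf y.1) (addOrderOf y.2) :=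
      Nat.Coprime.coprime_dvd_right d2 (Nat.Coprime.coprime_dvd_left d1 hab)
    rw [Prod.addOrderOf, Nat.Coprime.lcm_eq_mul hco]
    constructor
    · intro h
      exact dvd_mul_eq (by omega) (by omega) d1 d2 h
    · rintro ⟨h1, h2⟩; rw [h1, h2]
  calc Nat.card {x : ZMod (a * b) × ZMod (a * b) // addOrderOf x = a * b}
      = Nat.card {y : (ZMod a × ZMod a) × (ZMod b × ZMod b) // addOrderOf y = a * b} :=
        Nat.card_congr (Equiv.subtypeEquiv e3.toEquiv (fun x => by rw [show e3.toEquiv x = e3 x from rfl, horder]))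
    _ = Nat.card ({x : ZMod a × ZMod a // addOrderOf x = a}
          × {x : ZMod b × ZMod b // addOrderOf x = b}) :=
        Nat.card_congr ((Equiv.subtypeEquivRight key).trans
          (Equiv.subtypeProdEquivProd (p := fun u : ZMod a × ZMod a => addOrderOf u = a)
            (q := fun v : ZMod b × ZMod b => addOrderOf v = b)))
    _ = _ := Nat.card_prod _ _

lemma countT_formula : ∀ n : ℕ, 1 ≤ n →
    (∏ p ∈ n.primeFactors, p ^ 2) *
      Nat.card {x : ZMod n × ZMod n // addOrderOf x = n}
      = n ^ 2 * ∏ p ∈ n.primeFactors, (p ^ 2 - 1) := by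
  refine Nat.recOnPosPrimePosCoprime ?_ ?_ ?_ ?_
  · intro p e hp he _
    haveI : NeZero (p ^ e) := ⟨pow_ne_zero e hp.ne_zero⟩
    rw [countT_prime_pow p e hp he, Nat.primeFactors_prime_pow he.ne' hp,
      Finset.prod_singleton, Finset.prod_singleton]
    have hA : (p : ℤ) ^ 2 * (p : ℤ) ^ (2 * (e - 1)) = (p : ℤ) ^ (2 * e) := by
      rw [← pow_add]; congr 1; omega
    have hle : p ^ (2 * (e - 1)) ≤ p ^ (2 * e) :=
      Nat.pow_le_pow_right hp.pos (by omega)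
    have hp2 : 1 ≤ p ^ 2 := Nat.one_le_pow _ _ hp.pos
    zify [hle, hp2]
    linear_combination -hA
  · intro h; omega
  · intro _
    have huniq : ∀ x : ZMod 1 × ZMod 1, addOrderOf x = 1 := fun x => by
      rw [Subsingleton.elim x 0, addOrderOf_zero]
    simp only [Nat.primeFactors_one, Finset.prod_empty, one_mul, one_pow]
    rw [Nat.card_congr (Equiv.subtypeUnivEquiv huniq), Nat.card_eq_fintype_card]
    simp
  · intro a b ha hb hab IHa IHb _
    rw [countT_coprime a b ha hb hab,
      Nat.primeFactors_mul (by omega) (by omega),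
      Finset.prod_union (Nat.Coprime.disjoint_primeFactors hab),
      Finset.prod_union (Nat.Coprime.disjoint_primeFactors hab)]
    have := IHa (by omega)
    have := IHb (by omega)
    calc (∏ p ∈ a.primeFactors, p ^ 2) * (∏ p ∈ b.primeFactors, p ^ 2) *
          (Nat.card {x : ZMod a × ZMod a // addOrderOf x = a}
            * Nat.card {x : ZMod b × ZMod b // addOrderOf x = b})
        = ((∏ p ∈ a.primeFactors, p ^ 2) *
            Nat.card {x : ZMod a × ZMod a // addOrderOf x = a})
          * ((∏ p ∈ b.primeFactors, p ^ 2) *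
            Nat.card {x : ZMod b × ZMod b // addOrderOf x = b}) := by ring
      _ = (a ^ 2 * ∏ p ∈ a.primeFactors, (p ^ 2 - 1))
          * (b ^ 2 * ∏ p ∈ b.primeFactors, (p ^ 2 - 1)) := by
          rw [IHa (by omega), IHb (by omega)]
      _ = _ := by rw [mul_pow]; ring


lemma isAddCyclic_zmultiples {G : Type*} [AddGroup G] (x : G) :
    IsAddCyclic (zmultiples x) := by
  refine ⟨⟨x, mem_zmultiples x⟩, ?_⟩
  rintro ⟨y, n, rfl⟩
  exact ⟨n, Subtype.ext (by simp)⟩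

lemma card_order_eq_totient' {G : Type*} [AddGroup G] [Fintype G] [IsAddCyclic G]
    {N : ℕ} (h : Fintype.card G = N) :
    Nat.card {a : G // addOrderOf a = N} = Nat.totient N := by
  classical
  rw [Nat.card_eq_fintype_card, Fintype.card_subtype]
  exact IsAddCyclic.card_addOrderOf_eq_totient (h ▸ dvd_rfl)

lemma fibration_count (N : ℕ) (hN : 1 ≤ N) :
    Nat.card {x : ZMod N × ZMod N // addOrderOf x = N} =
      Nat.card {H : AddSubgroup (ZMod N × ZMod N) //
        (∃ x, H = zmultiples x) ∧ Nat.card H = N} * Nat.totient N := by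
  classical
  haveI : NeZero N := ⟨by omega⟩
  set M := ZMod N × ZMod N
  let Subs := {H : AddSubgroup M // (∃ x, H = zmultiples x) ∧ Nat.card H = N}
  let f : {x : M // addOrderOf x = N} → Subs := fun x =>
    ⟨zmultiples x.1, ⟨x.1, rfl⟩, by rw [Nat.card_zmultiples, x.2]⟩
  have fiber_equiv : ∀ H : Subs,
      {x : {x : M // addOrderOf x = N} // f x = H} ≃ {y : H.1 // addOrderOf y = N} := by
    intro H
    refine ⟨fun x => ⟨⟨x.1.1, ?_⟩, ?_⟩, fun y => ⟨⟨y.1.1, ?_⟩, ?_⟩, ?_, ?_⟩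
    · have : zmultiples x.1.1 = H.1 := congrArg Subtype.val x.2
      rw [← this]; exact mem_zmultiples _
    · rw [AddSubgroup.addOrderOf_mk]; exact x.1.2
    · -- addOrderOf y.1.1 = N
      exact (AddSubgroup.addOrderOf_coe _).trans y.2
    · -- f ⟨y.1.1, _⟩ = H
      refine Subtype.ext ?_
      show zmultiples (y.1.1 : M) = H.1
      refine AddSubgroup.eq_of_le_of_card_ge (zmultiples_le.2 y.1.2) ?_
      rw [Nat.card_zmultiples, AddSubgroup.addOrderOf_coe y.1, y.2, H.2.2]
    · intro x; exact Subtype.ext (Subtype.ext rfl)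
    · intro y; exact Subtype.ext (Subtype.ext rfl)
  haveI : Finite Subs := inferInstance
  letI : Fintype Subs := Fintype.ofFinite _
  have key : Nat.card {x : M // addOrderOf x = N} = ∑ H : Subs, Nat.card {y : H.1 // addOrderOf y = N} := by
    rw [Nat.card_congr (Equiv.sigmaFiberEquiv f).symm, Nat.card_eq_fintype_card,
      Fintype.card_sigma]
    refine Finset.sum_congr rfl fun H _ => ?_
    rw [← Nat.card_eq_fintype_card, Nat.card_congr (fiber_equiv H)]
  rw [key]
  have hcard : ∀ H : Subs, Nat.card {y : H.1 // addOrderOf y = N} = Nat.totient N := by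
    intro H
    obtain ⟨⟨x0, hx0⟩, hc⟩ := H.2
    haveI : IsAddCyclic H.1 := hx0 ▸ _root_.isAddCyclic_zmultiples x0
    letI : Fintype H.1 := Fintype.ofFinite _
    exact card_order_eq_totient' (by rw [← Nat.card_eq_fintype_card, hc])
  simp only [hcard, Finset.sum_const, Finset.card_univ, smul_eq_mul]
  rw [Nat.card_eq_fintype_card]


theorem count_cyclic_subgroups_order_N (N : ℕ) (hN : 1 ≤ N) :
    (∏ p ∈ N.primeFactors, p) *
      Nat.card {H : AddSubgroup (ZMod N × ZMod N) //
        (∃ x, H = AddSubgroup.zmultiples x) ∧ Nat.card H = N} =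
      N * ∏ p ∈ N.primeFactors, (p + 1) := by
  haveI : NeZero N := ⟨by omega⟩
  have h1 := fibration_count N hN
  have h2 := countT_formula N hN
  rw [h1] at h2
  set A := Nat.card {H : AddSubgroup (ZMod N × ZMod N) //
      (∃ x, H = AddSubgroup.zmultiples x) ∧ Nat.card H = N} with hA
  have hsplit : ∏ p ∈ N.primeFactors, (p ^ 2 - 1) =
      (∏ p ∈ N.primeFactors, (p - 1)) * ∏ p ∈ N.primeFactors, (p + 1) := by
    rw [← Finset.prod_mul_distrib]
    refine Finset.prod_congr rfl fun p hp => ?_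
    have h2p := (Nat.prime_of_mem_primeFactors hp).two_le
    zify [show 1 ≤ p by omega, show 1 ≤ p ^ 2 from Nat.one_le_pow _ _ (by omega)]
    ring
  have h3 := Nat.totient_mul_prod_primeFactors N
  have hP : 0 < ∏ p ∈ N.primeFactors, p :=
    Finset.prod_pos fun p hp => (Nat.prime_of_mem_primeFactors hp).pos
  have hphi : 0 < N.totient := Nat.totient_pos.2 (by omega)
  have hPsq : ∏ p ∈ N.primeFactors, p ^ 2 = (∏ p ∈ N.primeFactors, p) ^ 2 :=
    Finset.prod_pow _ _ _
  refine Nat.eq_of_mul_eq_mul_left (Nat.mul_pos hphi hP) ?_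
  calc N.totient * (∏ p ∈ N.primeFactors, p) * ((∏ p ∈ N.primeFactors, p) * A)
      = (∏ p ∈ N.primeFactors, p ^ 2) * (A * N.totient) := by rw [hPsq]; ring
    _ = N ^ 2 * ((∏ p ∈ N.primeFactors, (p - 1)) * ∏ p ∈ N.primeFactors, (p + 1)) := by
        rw [h2, hsplit]
    _ = (N * ∏ p ∈ N.primeFactors, (p - 1)) * (N * ∏ p ∈ N.primeFactors, (p + 1)) := by
        ring
    _ = N.totient * (∏ p ∈ N.primeFactors, p) * (N * ∏ p ∈ N.primeFactors, (p + 1)) := by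
        rw [← h3]
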